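/- Let λ_n be the largest eigenvalue of the n × n symmetric matrix A_n with diagonal entries 2cos(2πk/n), k = 0,...,n-1, ones on the first super- and sub-diagonals, and ones in the corners (1,n) and (n,1). Then for all sufficiently large n, 4 - 40/n < λ_n. -/

import Mathlib

/-- The n × n matrix of the operator x + x⁻¹ + y + y⁻¹ in the representation T_q of
the finite Heisenberg group: diagonal entries 2cos(2πqk/n), ones on the first super-
and sub-diagonals and in the corners (periodic tridiagonal). -/
noncomputable def heisMatrix (n q : ℕ) : Matrix (Fin n) (Fin n) ℝ :=
  Matrix.of fun i j : Fin n =>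
    if i = j then 2 * Real.cos (2 * Real.pi * q * (i : ℕ) / n)
    else if ((i : ℕ) + 1) % n = (j : ℕ) ∨ ((j : ℕ) + 1) % n = (i : ℕ) then 1
    else 0

open Matrix Finset

section Rayleigh

lemma rayleigh_le_sSup_spectrum {n : ℕ} (A : Matrix (Fin n) (Fin n) ℝ)
    (hA : A.IsHermitian) (v : Fin n → ℝ) (hv : 0 < v ⬝ᵥ v) {c : ℝ}
    (hc : c * (v ⬝ᵥ v) ≤ v ⬝ᵥ (A *ᵥ v)) : c ≤ sSup (spectrum ℝ A) := by
  have hne : Nonempty (Fin n) := by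
    rcases Nat.eq_zero_or_pos n with h | h
    · exfalso; subst h; simp [dotProduct] at hv
    · exact ⟨⟨0, h⟩⟩
  set U : Matrix (Fin n) (Fin n) ℝ := (hA.eigenvectorUnitary : Matrix (Fin n) (Fin n) ℝ) with hUdef
  have hU1 : U * star U = 1 := hA.eigenvectorUnitary.2.2
  set w : Fin n → ℝ := star U *ᵥ v with hwdef
  have hsUT : (star U) = Uᵀ := by
    rw [Matrix.star_eq_conjTranspose, Matrix.conjTranspose_eq_transpose_of_trivial]
  have hw2 : w ⬝ᵥ w = v ⬝ᵥ v := by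
    have : w ᵥ* star U = v := by
      rw [hsUT, Matrix.vecMul_transpose, hwdef, hsUT, Matrix.mulVec_mulVec, ← hsUT, hU1,
        Matrix.one_mulVec]
    rw [hwdef]
    conv_lhs => rw [Matrix.dotProduct_mulVec, this]
  have hAv : v ⬝ᵥ (A *ᵥ v) = ∑ i, hA.eigenvalues i * (w i * w i) := by
    conv_lhs => rw [hA.spectral_theorem, Unitary.conjStarAlgAut_apply]
    rw [← Matrix.mulVec_mulVec, ← Matrix.mulVec_mulVec, ← hUdef, ← hwdef,
      Matrix.dotProduct_mulVec v U]
    have hvU : v ᵥ* U = w := by rw [← Matrix.mulVec_transpose, hwdef, hsUT]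
    rw [hvU]
    simp only [dotProduct, Matrix.mulVec_diagonal]
    refine Finset.sum_congr rfl fun i _ => ?_
    simp [Function.comp]
    ring
  obtain ⟨i0, -, hmax⟩ := Finset.exists_max_image Finset.univ hA.eigenvalues
    ⟨Classical.arbitrary _, Finset.mem_univ _⟩
  have hsum : v ⬝ᵥ (A *ᵥ v) ≤ hA.eigenvalues i0 * (v ⬝ᵥ v) := by
    rw [hAv, ← hw2]
    have : (w ⬝ᵥ w) = ∑ i, w i * w i := rfl
    rw [this, Finset.mul_sum]
    exact Finset.sum_le_sum fun i _ =>
      mul_le_mul_of_nonneg_right (hmax i (Finset.mem_univ i)) (mul_self_nonneg _)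
  have hle : c ≤ hA.eigenvalues i0 := le_of_mul_le_mul_right (hc.trans hsum) hv
  refine hle.trans (le_csSup ?_ (hA.eigenvalues_mem_spectrum_real i0))
  exact (Matrix.finite_real_spectrum).bddAbove

end Rayleigh

section Decomp

noncomputable def shiftM (n : ℕ) : Matrix (Fin n) (Fin n) ℝ :=
  Matrix.of fun i j : Fin n => if ((i : ℕ) + 1) % n = (j : ℕ) then (1:ℝ) else 0

lemma succ_mod (n : ℕ) (i : Fin n) :
    ((i:ℕ)+1) % n = (if (i:ℕ)+1 = n then 0 else (i:ℕ)+1) := by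
  split_ifs with h
  · rw [h, Nat.mod_self]
  · exact Nat.mod_eq_of_lt (by have := i.isLt; omega)

lemma heis_decomp (n : ℕ) (hn : 3 ≤ n) :
    heisMatrix n 1 = Matrix.diagonal
        (fun i : Fin n => 2 * Real.cos (2 * Real.pi * ((1:ℕ):ℝ) * (i:ℕ) / n))
      + (shiftM n + (shiftM n)ᵀ) := by
  ext i j
  have hi := i.isLt
  have hj := j.isLt
  simp only [heisMatrix, shiftM, Matrix.of_apply, Matrix.add_apply, Matrix.transpose_apply,
    Matrix.diagonal_apply, succ_mod]
  by_cases hij : i = j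
  · subst hij
    rw [if_pos rfl, if_pos rfl]
    have h1 : ¬ ((if (i:ℕ)+1 = n then 0 else (i:ℕ)+1) = (i:ℕ)) := by split_ifs <;> omega
    rw [if_neg h1]
    ring
  · have hvne : (i:ℕ) ≠ (j:ℕ) := fun h => hij (Fin.ext h)
    rw [if_neg hij, if_neg hij]
    split_ifs
    any_goals norm_num
    all_goals (exfalso; omega)

lemma heis_hermitian (n : ℕ) : (heisMatrix n 1).IsHermitian := by
  unfold Matrix.IsHermitian
  ext i j
  simp only [Matrix.conjTranspose_apply, heisMatrix, Matrix.of_apply, star_trivial]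
  by_cases hij : i = j
  · subst hij; rfl
  · rw [if_neg (Ne.symm hij), if_neg hij]
    exact if_congr or_comm rfl rfl

lemma fin_val_add_one (n : ℕ) [NeZero n] (hn : 2 ≤ n) (i : Fin n) :
    ((i + 1 : Fin n) : ℕ) = ((i:ℕ) + 1) % n := by
  have h1 : (1 : Fin n).val = 1 := by
    rw [Fin.val_one']; exact Nat.mod_eq_of_lt (by omega)
  rw [Fin.add_def, h1]

lemma shiftM_mulVec (n : ℕ) [NeZero n] (hn : 2 ≤ n) (v : Fin n → ℝ) (i : Fin n) :
    (shiftM n *ᵥ v) i = v (i + 1) := by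
  unfold shiftM Matrix.mulVec dotProduct
  rw [Finset.sum_eq_single (i+1)]
  · simp only [Matrix.of_apply]
    rw [if_pos (by rw [fin_val_add_one n hn]), one_mul]
  · intro j _ hj
    simp only [Matrix.of_apply]
    rw [if_neg, zero_mul]
    intro h
    exact hj (Fin.ext (by rw [fin_val_add_one n hn, ← h]))
  · intro h; exact absurd (Finset.mem_univ _) h

end Decomp

section Sums

def gN (n m k : ℕ) : ℕ := m - min k (n - k)

lemma shift_sum (n : ℕ) [NeZero n] (F : Fin n → ℝ) :
    ∑ i : Fin n, F (i + 1) = ∑ i : Fin n, F i :=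
  Fintype.sum_equiv (Equiv.addRight (1 : Fin n)) _ _ (fun _ => rfl)

lemma fin_val_add_one' (n : ℕ) [NeZero n] (hn : 2 ≤ n) (i : Fin n) :
    ((i + 1 : Fin n) : ℕ) = (if (i:ℕ)+1 = n then 0 else (i:ℕ)+1) := by
  rw [fin_val_add_one n hn, succ_mod]

lemma gN_lipschitz (n m : ℕ) [NeZero n] (hn : 2 ≤ n) (i : Fin n) :
    gN n m ((i + 1 : Fin n) : ℕ) ≤ gN n m i + 1 ∧ gN n m i ≤ gN n m ((i + 1 : Fin n) : ℕ) + 1 := by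
  rw [fin_val_add_one' n hn i]
  have hi := i.isLt
  unfold gN
  split_ifs with h <;> omega

lemma sq_diff_le_one (n m : ℕ) [NeZero n] (hn : 2 ≤ n) (i : Fin n) :
    ((gN n m i : ℝ) - (gN n m ((i + 1 : Fin n) : ℕ) : ℝ))^2 ≤ 1 := by
  obtain ⟨h1, h2⟩ := gN_lipschitz n m hn i
  rw [sq_le_one_iff_abs_le_one, abs_le]
  constructor <;> [skip; skip] <;>
  · have c1 : ((gN n m ((i + 1 : Fin n) : ℕ)) : ℝ) ≤ (gN n m i : ℝ) + 1 := by exact_mod_cast h1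
    have c2 : ((gN n m i) : ℝ) ≤ (gN n m ((i + 1 : Fin n) : ℕ) : ℝ) + 1 := by exact_mod_cast h2
    linarith

lemma count_lt (n m : ℕ) (hmn : m ≤ n) :
    ∑ i : Fin n, (if (i:ℕ) < m then (1:ℝ) else 0) = m := by
  rw [Fin.sum_univ_eq_sum_range (fun k => if k < m then (1:ℝ) else 0) n]
  rw [← Finset.sum_subset (Finset.range_subset_range.2 hmn)
    (fun x _ hx => by rw [if_neg (by simpa using hx)])]
  rw [Finset.sum_congr rfl (fun x hx => if_pos (Finset.mem_range.1 hx))]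
  simp

lemma count_gt (n m : ℕ) (hmn : m ≤ n) :
    ∑ i : Fin n, (if n - m < (i:ℕ) then (1:ℝ) else 0) ≤ m := by
  rw [Fin.sum_univ_eq_sum_range (fun k => if n - m < k then (1:ℝ) else 0) n]
  have hsub : Finset.Ico (n - m + 1) n ⊆ Finset.range n := by
    intro x hx; rw [Finset.mem_range]; exact (Finset.mem_Ico.1 hx).2
  rw [← Finset.sum_subset hsub (fun x hx hx2 => by
    rw [if_neg]
    rw [Finset.mem_range] at hx
    rw [Finset.mem_Ico] at hx2
    omega)]
  rw [Finset.sum_congr rfl (fun x hx => if_pos (by rw [Finset.mem_Ico] at hx; omega))]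
  simp only [Finset.sum_const, Nat.card_Ico, nsmul_eq_mul, mul_one]
  have : n - (n - m + 1) ≤ m := by omega
  exact_mod_cast Nat.cast_le.mpr this

lemma nonzero_count (n m : ℕ) [NeZero n] (hn : 2*m + 2 ≤ n) :
    ∑ i : Fin n, (if gN n m (i:ℕ) = 0 then (0:ℝ) else 1) ≤ 2 * m := by
  have hmn : m ≤ n := by omega
  have step : ∀ i : Fin n, (if gN n m (i:ℕ) = 0 then (0:ℝ) else 1)
      ≤ (if (i:ℕ) < m then (1:ℝ) else 0) + (if n - m < (i:ℕ) then (1:ℝ) else 0) := by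
    intro i
    have hi := i.isLt
    split_ifs with h h1 h2 h3 h4 <;> try norm_num
    · exfalso; unfold gN at h; omega
  calc ∑ i : Fin n, (if gN n m (i:ℕ) = 0 then (0:ℝ) else 1)
      ≤ ∑ i : Fin n, ((if (i:ℕ) < m then (1:ℝ) else 0) + (if n - m < (i:ℕ) then (1:ℝ) else 0)) :=
        Finset.sum_le_sum (fun i _ => step i)
    _ = (∑ i : Fin n, (if (i:ℕ) < m then (1:ℝ) else 0))
        + ∑ i : Fin n, (if n - m < (i:ℕ) then (1:ℝ) else 0) := Finset.sum_add_distrib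
    _ ≤ m + m := add_le_add (le_of_eq (count_lt n m hmn)) (count_gt n m hmn)
    _ = 2 * m := by ring

lemma E_bound (n m : ℕ) [NeZero n] (hn : 2*m + 2 ≤ n) :
    ∑ i : Fin n, ((gN n m (i:ℕ) : ℝ) - (gN n m ((i + 1 : Fin n) : ℕ) : ℝ))^2 ≤ 4 * m := by
  have hn2 : 2 ≤ n := by omega
  have step : ∀ i : Fin n, ((gN n m (i:ℕ) : ℝ) - (gN n m ((i + 1 : Fin n) : ℕ) : ℝ))^2
      ≤ (if gN n m (i:ℕ) = 0 then (0:ℝ) else 1)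
        + (if gN n m ((i + 1 : Fin n) : ℕ) = 0 then (0:ℝ) else 1) := by
    intro i
    by_cases h1 : gN n m (i:ℕ) = 0 <;> by_cases h2 : gN n m ((i + 1 : Fin n) : ℕ) = 0
    · simp [h1, h2]
    · rw [if_pos h1, if_neg h2]; have := sq_diff_le_one n m hn2 i; linarith
    · rw [if_neg h1, if_pos h2]; have := sq_diff_le_one n m hn2 i; linarith
    · rw [if_neg h1, if_neg h2]; have := sq_diff_le_one n m hn2 i; linarith
  calc ∑ i : Fin n, ((gN n m (i:ℕ) : ℝ) - (gN n m ((i + 1 : Fin n) : ℕ) : ℝ))^2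
      ≤ ∑ i : Fin n, ((if gN n m (i:ℕ) = 0 then (0:ℝ) else 1)
        + (if gN n m ((i + 1 : Fin n) : ℕ) = 0 then (0:ℝ) else 1)) :=
        Finset.sum_le_sum (fun i _ => step i)
    _ = (∑ i : Fin n, (if gN n m (i:ℕ) = 0 then (0:ℝ) else 1))
        + ∑ i : Fin n, (if gN n m ((i + 1 : Fin n) : ℕ) = 0 then (0:ℝ) else 1) :=
        Finset.sum_add_distrib
    _ = (∑ i : Fin n, (if gN n m (i:ℕ) = 0 then (0:ℝ) else 1))
        + ∑ i : Fin n, (if gN n m ((i : Fin n) : ℕ) = 0 then (0:ℝ) else 1) := by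
        rw [shift_sum n (fun i => if gN n m (i:ℕ) = 0 then (0:ℝ) else 1)]
    _ ≤ 2*m + 2*m := add_le_add (nonzero_count n m hn) (nonzero_count n m hn)
    _ = 4 * m := by ring

lemma cube_lb : ∀ t : ℕ, (t:ℝ)^3/3 ≤ ∑ k ∈ Finset.range t, ((k+1:ℕ):ℝ)^2 := by
  intro t
  induction t with
  | zero => simp
  | succ t ih =>
    rw [Finset.sum_range_succ]
    push_cast
    push_cast at ih
    nlinarith [ih, Nat.cast_nonneg (α := ℝ) t]

lemma S_lb (n m : ℕ) (hn : 2*m + 2 ≤ n) (hm : 1 ≤ m) :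
    ((m:ℝ)^3 + ((m:ℝ)-1)^3)/3 ≤ ∑ i : Fin n, (gN n m (i:ℕ) : ℝ)^2 := by
  rw [Fin.sum_univ_eq_sum_range (fun k => (gN n m k : ℝ)^2) n]
  have hsub : Finset.range m ∪ Finset.Ico (n-m+1) n ⊆ Finset.range n := by
    intro x hx
    rcases Finset.mem_union.1 hx with h | h
    · rw [Finset.mem_range] at *; omega
    · rw [Finset.mem_Ico] at h; rw [Finset.mem_range]; omega
  have hdisj : Disjoint (Finset.range m) (Finset.Ico (n-m+1) n) := by
    rw [Finset.disjoint_left]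
    intro x hx hx2
    rw [Finset.mem_range] at hx; rw [Finset.mem_Ico] at hx2; omega
  have hmono : ∑ k ∈ Finset.range m ∪ Finset.Ico (n-m+1) n, (gN n m k : ℝ)^2
      ≤ ∑ k ∈ Finset.range n, (gN n m k : ℝ)^2 :=
    Finset.sum_le_sum_of_subset_of_nonneg hsub (fun _ _ _ => by positivity)
  rw [Finset.sum_union hdisj] at hmono
  have hA : ∑ k ∈ Finset.range m, (gN n m k : ℝ)^2 = ∑ k ∈ Finset.range m, ((k+1:ℕ):ℝ)^2 := by
    rw [← Finset.sum_range_reflect (fun k => ((k+1:ℕ):ℝ)^2) m]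
    refine Finset.sum_congr rfl (fun k hk => ?_)
    rw [Finset.mem_range] at hk
    congr 1
    norm_cast
    unfold gN
    omega
  have hB : ∑ k ∈ Finset.Ico (n-m+1) n, (gN n m k : ℝ)^2
      = ∑ j ∈ Finset.range (m-1), ((j+1:ℕ):ℝ)^2 := by
    rw [Finset.sum_Ico_eq_sum_range]
    have hr : n - (n-m+1) = m - 1 := by omega
    rw [hr]
    refine Finset.sum_congr rfl (fun j hj => ?_)
    rw [Finset.mem_range] at hj
    congr 1
    norm_cast
    unfold gN
    omega
  have c1 := cube_lb m
  have c2 := cube_lb (m-1)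
  have hc : ((m-1:ℕ):ℝ) = (m:ℝ) - 1 := by
    rw [Nat.cast_sub hm]; norm_num
  rw [hc] at c2
  rw [hA, hB] at hmono
  linarith

lemma diag_term (n m : ℕ) (i : Fin n) :
    (2 - (2*Real.pi*m/n)^2) * ((gN n m (i:ℕ) : ℝ) * (gN n m (i:ℕ) : ℝ))
      ≤ (2 * Real.cos (2 * Real.pi * ((1:ℕ):ℝ) * ((i:ℕ):ℝ) / n))
        * ((gN n m (i:ℕ) : ℝ) * (gN n m (i:ℕ) : ℝ)) := by
  by_cases h : gN n m (i:ℕ) = 0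
  · simp [h]
  · have hi := i.isLt
    have hn0 : (0:ℝ) < n := by
      have : 0 < n := by omega
      exact_mod_cast this
    set t : ℕ := min (i:ℕ) (n - (i:ℕ)) with ht
    have htm : t < m := by
      unfold gN at h; omega
    have hcos : Real.cos (2 * Real.pi * ((1:ℕ):ℝ) * ((i:ℕ):ℝ) / n)
        = Real.cos (2*Real.pi*(t:ℝ)/n) := by
      rcases le_total ((i:ℕ)) (n - (i:ℕ)) with hle | hle
      · have : t = (i:ℕ) := min_eq_left hle
        rw [this]
        norm_num
      · have htr : t = n - (i:ℕ) := min_eq_right hle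
        have harg : 2 * Real.pi * ((1:ℕ):ℝ) * ((i:ℕ):ℝ) / n
            = 2 * Real.pi - 2 * Real.pi * (((n - (i:ℕ) : ℕ)):ℝ) / n := by
          rw [Nat.cast_sub hi.le]
          push_cast
          field_simp
          ring
        rw [harg, Real.cos_two_pi_sub, htr]
    rw [hcos]
    have hvpos : (0:ℝ) ≤ (gN n m (i:ℕ) : ℝ) * (gN n m (i:ℕ) : ℝ) := by positivity
    refine mul_le_mul_of_nonneg_right ?_ hvpos
    have h2 : 1 - (2*Real.pi*(t:ℝ)/n)^2/2 ≤ Real.cos (2*Real.pi*(t:ℝ)/n) :=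
      Real.one_sub_sq_div_two_le_cos
    have h3 : (2*Real.pi*(t:ℝ)/n)^2 ≤ (2*Real.pi*(m:ℝ)/n)^2 := by
      have htm' : (t:ℝ) ≤ (m:ℝ) := by exact_mod_cast htm.le
      gcongr
    linarith

end Sums

set_option maxHeartbeats 2000000 in
/-- for sufficiently large n, the largest eigenvalue λ_n of the matrix
A_n (the case q = 1) satisfies 4 - 40/n < λ_n. -/
theorem heisMatrix_top_eigenvalue_lower_bound :
    ∃ N : ℕ, ∀ n : ℕ, N ≤ n →
      4 - 40 / (n : ℝ) < sSup (spectrum ℝ (heisMatrix n 1)) := by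
  use 100000
  intro n hn
  haveI : NeZero n := ⟨by omega⟩
  have hn3 : 3 ≤ n := by omega
  set m := Nat.sqrt (2 * n / 5) with hmdef
  -- basic nat facts
  have hx1 : m * m ≤ 2 * n / 5 := Nat.sqrt_le (2 * n / 5)
  have hx2 : 2 * n / 5 < (m+1) * (m+1) := Nat.lt_succ_sqrt (2 * n / 5)
  have hm63 : 63 ≤ m := by
    rw [hmdef]
    rw [Nat.le_sqrt]
    omega
  have hmn : 2 * m + 2 ≤ n := by
    have h63 : 63 * m ≤ m * m := Nat.mul_le_mul_right m hm63
    omega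
  have hm1 : 1 ≤ m := by omega
  -- real versions
  have rn0 : (0:ℝ) < n := by
    have : 0 < n := by omega
    exact_mod_cast this
  have r1 : 5 * ((m:ℝ) * m) ≤ 2 * n := by
    have h : 5 * (m * m) ≤ 2 * n := by omega
    exact_mod_cast h
  have r2 : 2 * (n:ℝ) ≤ 5 * (((m:ℝ)+1) * ((m:ℝ)+1)) := by
    have h : 2 * n ≤ 5 * ((m+1) * (m+1)) := by omega
    calc 2 * (n:ℝ) ≤ ((5 * ((m+1) * (m+1)) : ℕ) : ℝ) := by exact_mod_cast h
    _ = 5 * (((m:ℝ)+1) * ((m:ℝ)+1)) := by push_cast; ring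
  have rm63 : (63:ℝ) ≤ m := by exact_mod_cast hm63
  have hpi2 : Real.pi^2 ≤ 9.9225 := by
    nlinarith [Real.pi_lt_d2, Real.pi_gt_three]
  -- the test vector
  set v : Fin n → ℝ := fun i => (gN n m (i:ℕ) : ℝ) with hvdef
  set S : ℝ := ∑ i : Fin n, v i * v i with hSdef
  set E : ℝ := ∑ i : Fin n, (v i - v (i + 1))^2 with hEdef
  set c : ℝ := (2*Real.pi*(m:ℝ)/n)^2 with hcdef
  -- quadratic form identity
  have hvv : v ⬝ᵥ v = S := rfl
  have qf : v ⬝ᵥ (heisMatrix n 1 *ᵥ v)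
      = (∑ i : Fin n, v i * ((2 * Real.cos (2 * Real.pi * ((1:ℕ):ℝ) * (i:ℕ) / n)) * v i))
        + 2 * ∑ i : Fin n, v i * v (i + 1) := by
    rw [heis_decomp n hn3, Matrix.add_mulVec, dotProduct_add, Matrix.add_mulVec,
      dotProduct_add]
    have t1 : v ⬝ᵥ (Matrix.diagonal
        (fun i : Fin n => 2 * Real.cos (2 * Real.pi * ((1:ℕ):ℝ) * (i:ℕ) / n)) *ᵥ v)
        = ∑ i : Fin n, v i * ((2 * Real.cos (2 * Real.pi * ((1:ℕ):ℝ) * (i:ℕ) / n)) * v i) := by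
      unfold dotProduct
      exact Finset.sum_congr rfl (fun i _ => by rw [Matrix.mulVec_diagonal])
    have t2 : v ⬝ᵥ (shiftM n *ᵥ v) = ∑ i : Fin n, v i * v (i + 1) := by
      unfold dotProduct
      exact Finset.sum_congr rfl (fun i _ => by rw [shiftM_mulVec n (by omega) v i])
    have t3 : v ⬝ᵥ ((shiftM n)ᵀ *ᵥ v) = ∑ i : Fin n, v i * v (i + 1) := by
      rw [Matrix.dotProduct_mulVec v ((shiftM n)ᵀ) v, Matrix.vecMul_transpose,
        dotProduct_comm]
      exact t2
    rw [t1, t2, t3]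
    ring
  -- the cross-term identity
  have hTS : 2 * ∑ i : Fin n, v i * v (i + 1) = 2 * S - E := by
    have hstep : ∀ i : Fin n, 2 * (v i * v (i+1))
        = v i * v i + v (i+1) * v (i+1) - (v i - v (i+1))^2 := fun i => by ring
    calc 2 * ∑ i : Fin n, v i * v (i + 1)
        = ∑ i : Fin n, (v i * v i + v (i+1) * v (i+1) - (v i - v (i+1))^2) := by
          rw [Finset.mul_sum]
          exact Finset.sum_congr rfl (fun i _ => hstep i)
      _ = (∑ i : Fin n, (v i * v i + v (i+1) * v (i+1))) - E := by
          rw [hEdef, Finset.sum_sub_distrib]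
      _ = ((∑ i : Fin n, v i * v i) + ∑ i : Fin n, v (i+1) * v (i+1)) - E := by
          rw [Finset.sum_add_distrib]
      _ = 2 * S - E := by
          rw [shift_sum n (fun i => v i * v i), ← hSdef]; ring
  -- diagonal bound
  have hD : (2 - c) * S ≤ ∑ i : Fin n, v i * ((2 * Real.cos (2 * Real.pi * ((1:ℕ):ℝ) * (i:ℕ) / n)) * v i) := by
    rw [hSdef, Finset.mul_sum]
    refine Finset.sum_le_sum (fun i _ => ?_)
    have := diag_term n m i
    rw [hvdef, hcdef]
    calc (2 - (2*Real.pi*(m:ℝ)/n)^2) * ((gN n m (i:ℕ) : ℝ) * (gN n m (i:ℕ) : ℝ))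
        ≤ (2 * Real.cos (2 * Real.pi * ((1:ℕ):ℝ) * ((i:ℕ):ℝ) / n))
          * ((gN n m (i:ℕ) : ℝ) * (gN n m (i:ℕ) : ℝ)) := this
      _ = (gN n m (i:ℕ) : ℝ) * ((2 * Real.cos (2 * Real.pi * ((1:ℕ):ℝ) * ((i:ℕ):ℝ) / n))
          * (gN n m (i:ℕ) : ℝ)) := by ring
  -- E bound and S bound
  have hE : E ≤ 4 * m := by
    rw [hEdef]
    exact E_bound n m hmn
  have hS1 : ((m:ℝ)^3 + ((m:ℝ)-1)^3)/3 ≤ S := by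
    have := S_lb n m hmn hm1
    rw [hSdef]
    calc ((m:ℝ)^3 + ((m:ℝ)-1)^3)/3 ≤ ∑ i : Fin n, (gN n m (i:ℕ) : ℝ)^2 := this
      _ = ∑ i : Fin n, v i * v i := Finset.sum_congr rfl (fun i _ => by rw [hvdef]; ring)
  have hS0 : 0 < S := by nlinarith [hS1, rm63]
  -- numeric bounds
  have n1 : c * n ≤ 16 := by
    have hc1 : c * n = 4 * Real.pi^2 * ((m:ℝ)*m) / n := by
      rw [hcdef]; field_simp; ring
    rw [hc1, div_le_iff₀ rn0]
    nlinarith [r1, hpi2, Real.pi_gt_three, sq_nonneg ((m:ℝ))]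
  have n2 : 4 * (m:ℝ) * n ≤ 23 * S := by
    have h23 : 4 * (m:ℝ) * n ≤ 23 * (((m:ℝ)^3 + ((m:ℝ)-1)^3)/3) := by
      nlinarith [r2, rm63]
    linarith [mul_le_mul_of_nonneg_left hS1 (by norm_num : (0:ℝ) ≤ 23)]
  -- assemble Rayleigh bound
  have hcS : c * S ≤ 16 / n * S := by
    have hc' : c ≤ 16 / n := by rw [le_div_iff₀ rn0]; exact n1
    exact mul_le_mul_of_nonneg_right hc' hS0.le
  have hES : E ≤ 23 / n * S := by
    have : 4 * (m:ℝ) ≤ 23 / n * S := by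
      rw [div_mul_eq_mul_div, le_div_iff₀ rn0]
      linarith [n2]
    linarith [hE]
  have hmain : (4 - 39/(n:ℝ)) * (v ⬝ᵥ v) ≤ v ⬝ᵥ (heisMatrix n 1 *ᵥ v) := by
    rw [hvv, qf, hTS]
    have h39 : (39:ℝ)/n * S = 16/n * S + 23/n * S := by ring
    have : (4 - 39/(n:ℝ)) * S = 4 * S - 39/n * S := by ring
    linarith [hD, hcS, hES]
  have hray : 4 - 39/(n:ℝ) ≤ sSup (spectrum ℝ (heisMatrix n 1)) :=
    rayleigh_le_sSup_spectrum (heisMatrix n 1) (heis_hermitian n) v (by rw [hvv]; exact hS0) hmain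
  have hfin : (39:ℝ)/n < 40/n := by
    have h1n : 0 < 1/(n:ℝ) := by positivity
    have heq : (40:ℝ)/n - 39/n = 1/n := by ring
    linarith
  linarith [hray, hfin]
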